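/- Let j < n < d be nonnegative integers. Let M ∈ ℝ^{j×d} have rank j, let P ∈ ℝ^{d×(d−j)} satisfy PᵀP = I_{d−j} and MP = 0, and let S ∈ ℝ^{d×d} be symmetric positive semidefinite. Then rank(PᵀSP) = n − j if and only if the (j+d)×d matrix obtained by stacking M on top of S has rank n. -/
import Mathlib


open Matrix

/-- Let `j < n < d`, `M ∈ ℝ^{j×d}` of rank `j`, `P ∈ ℝ^{d×(d−j)}` with
`PᵀP = I` and `MP = 0`, and `S ∈ ℝ^{d×d}` symmetric positive semidefinite. Then
`rank (PᵀSP) = n − j` iff the `(j+d)×d` matrix formed by stacking `M` on top of `S` has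
rank `n`. -/
theorem statement5
    (j n d : ℕ) (hjn : j < n) (hnd : n < d)
    (M : Matrix (Fin j) (Fin d) ℝ) (hM : M.rank = j)
    (P : Matrix (Fin d) (Fin (d - j)) ℝ)
    (hP1 : Pᵀ * P = 1) (hP2 : M * P = 0)
    (S : Matrix (Fin d) (Fin d) ℝ) (hS : S.PosSemidef) :
    (Pᵀ * S * P).rank = n - j ↔ (Matrix.fromRows M S).rank = n := by
  classical
  have hjd : j ≤ d := le_of_lt (lt_trans hjn hnd)
  -- P is injective as a linear map
  have hPinj : Function.Injective P.mulVecLin := by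
    intro x y hxy
    have h : Pᵀ *ᵥ (P *ᵥ x) = Pᵀ *ᵥ (P *ᵥ y) := by
      simpa [Matrix.mulVecLin_apply] using congrArg (Pᵀ *ᵥ ·) hxy
    simpa [Matrix.mulVec_mulVec, hP1, Matrix.one_mulVec] using h
  -- finrank of range of P
  have hPrange : Module.finrank ℝ (LinearMap.range P.mulVecLin) = d - j := by
    have h1 := LinearMap.finrank_range_add_finrank_ker P.mulVecLin
    rw [LinearMap.ker_eq_bot.mpr hPinj, finrank_bot] at h1
    simpa [Module.finrank_fin_fun] using h1
  -- finrank of ker of M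
  have hMker : Module.finrank ℝ (LinearMap.ker M.mulVecLin) = d - j := by
    have h1 := LinearMap.finrank_range_add_finrank_ker M.mulVecLin
    rw [show Module.finrank ℝ (LinearMap.range M.mulVecLin) = j from hM,
      Module.finrank_fin_fun] at h1
    omega
  -- range P = ker M
  have hRK : LinearMap.range P.mulVecLin = LinearMap.ker M.mulVecLin := by
    apply Submodule.eq_of_le_of_finrank_le
    · rintro v ⟨x, rfl⟩
      simp only [LinearMap.mem_ker, Matrix.mulVecLin_apply, Matrix.mulVec_mulVec, hP2,
        Matrix.zero_mulVec]
    · rw [hPrange, hMker]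
  -- the common kernel
  set K : Submodule ℝ (Fin d → ℝ) :=
    LinearMap.ker M.mulVecLin ⊓ LinearMap.ker S.mulVecLin with hK
  -- ker of fromRows M S is K
  have hFR : LinearMap.ker (Matrix.fromRows M S).mulVecLin = K := by
    ext v
    simp only [LinearMap.mem_ker, Matrix.mulVecLin_apply, Matrix.fromRows_mulVec, hK,
      Submodule.mem_inf]
    constructor
    · intro h
      constructor
      · ext i; exact congrFun h (Sum.inl i)
      · ext i; exact congrFun h (Sum.inr i)
    · rintro ⟨h1, h2⟩
      rw [h1, h2]
      ext (i | i) <;> rfl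
  -- P maps ker (PᵀSP) onto K
  have hmap : Submodule.map P.mulVecLin (LinearMap.ker (Pᵀ * S * P).mulVecLin) = K := by
    ext v
    constructor
    · rintro ⟨x, hx, rfl⟩
      simp only [SetLike.mem_coe, LinearMap.mem_ker, Matrix.mulVecLin_apply] at hx
      have hSv : S *ᵥ (P *ᵥ x) = 0 := by
        rw [← hS.dotProduct_mulVec_zero_iff]
        have : (P *ᵥ x) ⬝ᵥ (S *ᵥ (P *ᵥ x)) = x ⬝ᵥ ((Pᵀ * S * P) *ᵥ x) := by
          rw [← Matrix.mulVec_mulVec, ← Matrix.mulVec_mulVec, Matrix.dotProduct_mulVec x,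
            Matrix.vecMul_transpose]
        simp only [star_trivial, this, hx, dotProduct_zero]
      refine Submodule.mem_inf.mpr ⟨?_, ?_⟩
      · simp only [LinearMap.mem_ker, Matrix.mulVecLin_apply, Matrix.mulVec_mulVec, hP2,
          Matrix.zero_mulVec]
      · simpa [LinearMap.mem_ker, Matrix.mulVecLin_apply] using hSv
    · intro hv
      obtain ⟨hv1, hv2⟩ := Submodule.mem_inf.mp hv
      have : v ∈ LinearMap.range P.mulVecLin := hRK ▸ hv1
      obtain ⟨x, rfl⟩ := this
      refine ⟨x, ?_, rfl⟩
      simp only [SetLike.mem_coe, LinearMap.mem_ker, Matrix.mulVecLin_apply] at hv2 ⊢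
      rw [← Matrix.mulVec_mulVec, ← Matrix.mulVec_mulVec, hv2, Matrix.mulVec_zero]
  -- finrank of ker (PᵀSP) = finrank K
  have hkerPSP : Module.finrank ℝ (LinearMap.ker (Pᵀ * S * P).mulVecLin)
      = Module.finrank ℝ K := by
    rw [← hmap]
    exact (Submodule.equivMapOfInjective P.mulVecLin hPinj _).finrank_eq
  -- rank-nullity for both matrices
  have h1 := LinearMap.finrank_range_add_finrank_ker (Pᵀ * S * P).mulVecLin
  have h2 := LinearMap.finrank_range_add_finrank_ker (Matrix.fromRows M S).mulVecLin
  rw [hkerPSP, Module.finrank_fin_fun] at h1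
  rw [hFR, Module.finrank_fin_fun] at h2
  have e1 : (Pᵀ * S * P).rank + Module.finrank ℝ K = d - j := h1
  have e2 : (Matrix.fromRows M S).rank + Module.finrank ℝ K = d := h2
  omega
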